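/- Let a, b, c, d, f, g ∈ ℂ all with positive real parts, and suppose the series rearrangement identities hold. Then the continuous dual Hahn polynomials satisfy the connection relation S_n(x²; a,b,c) = Σ_{k=0}^n C(n,k) (k+a+b)_{n−k}(k+a+c)_{n−k} · ₃F₂(k−n, k+a+f, k+a+g; k+a+b, k+a+c; 1) · S_k(x²; a,f,g), for all x ∈ (0,∞) and n ∈ ℕ₀. -/

import Mathlib

open Complex Finset

/-- The Pochhammer symbol (rising factorial) `(z)_n = z(z+1)⋯(z+n-1)`. -/
noncomputable def poch (z : ℂ) (n : ℕ) : ℂ := ∏ i ∈ Finset.range n, (z + i)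

/-- The continuous dual Hahn polynomial `S_n(x²; a, b, c)`, via its terminating
`₃F₂(-n, a+ix, a-ix; a+b, a+c; 1)` representation. -/
noncomputable def cdHahn (n : ℕ) (x : ℝ) (a b c : ℂ) : ℂ :=
  poch (a + b) n * poch (a + c) n *
    ∑ j ∈ Finset.range (n + 1),
      poch (-(n : ℂ)) j * poch (a + Complex.I * x) j * poch (a - Complex.I * x) j /
        (poch (a + b) j * poch (a + c) j * j.factorial)

lemma poch_add (z : ℂ) (m s : ℕ) : poch z (m + s) = poch z m * poch (z + m) s := by
  simp only [poch, Finset.prod_range_add]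
  congr 1
  exact Finset.prod_congr rfl fun i _ => by push_cast; ring

lemma poch_ne_zero {z : ℂ} (hz : 0 < z.re) (n : ℕ) : poch z n ≠ 0 := by
  rw [poch, Finset.prod_ne_zero_iff]
  intro i _ h
  have h2 := congrArg Complex.re h
  simp only [Complex.add_re, Complex.natCast_re, Complex.zero_re] at h2
  have : (0:ℝ) ≤ (i:ℝ) := by positivity
  linarith

lemma poch_neg (n : ℕ) (j : ℕ) : poch (-(n:ℂ)) j = (-1)^j * (n.descFactorial j : ℂ) := by
  induction j with
  | zero => simp [poch]
  | succ j ih =>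
    have h1 : poch (-(n:ℂ)) (j+1) = poch (-(n:ℂ)) j * (-(n:ℂ) + j) := by
      simp [poch, Finset.prod_range_succ]
    rw [h1, ih, Nat.descFactorial_succ]
    rcases le_or_gt j n with h | h
    · have h2 : -(n:ℂ) + j = -((n - j : ℕ) : ℂ) := by push_cast [h]; ring
      rw [h2]; push_cast; ring
    · rw [Nat.descFactorial_eq_zero_iff_lt.mpr h]
      simp

lemma poch_neg_choose (n : ℕ) (j : ℕ) :
    poch (-(n:ℂ)) j = (-1)^j * (j.factorial : ℂ) * (n.choose j : ℂ) := by
  rw [poch_neg, Nat.descFactorial_eq_factorial_mul_choose]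
  push_cast; ring

lemma poch_neg_eq_zero {n j : ℕ} (h : n < j) : poch (-(n:ℂ)) j = 0 := by
  rw [poch_neg, Nat.descFactorial_eq_zero_iff_lt.mpr h]; simp

lemma alt_sum (M : ℕ) : (∑ t ∈ Finset.range (M+1), (-1:ℂ)^t * (M.choose t : ℂ))
    = if M = 0 then 1 else 0 := by
  have h := Int.alternating_sum_range_choose (n := M)
  have h2 := congrArg (fun z : ℤ => (z : ℂ)) h
  push_cast at h2
  rw [h2]

lemma cdh_inner_sum (m j : ℕ) :
    (∑ k ∈ Finset.range (m+1), (m.choose k : ℂ) * (-1)^(m-k) * poch (-(k:ℂ)) j)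
    = if m = j then (-1:ℂ)^j * (j.factorial : ℂ) else 0 := by
  rcases lt_or_ge m j with h | h
  · rw [if_neg (by omega)]
    refine Finset.sum_eq_zero fun k hk => ?_
    simp only [Finset.mem_range] at hk
    rw [poch_neg_choose, Nat.choose_eq_zero_of_lt (by omega : k < j)]
    simp
  · have hsubset : Finset.Ico j (m+1) ⊆ Finset.range (m+1) := by
      intro k hk; simp only [Finset.mem_Ico] at hk; simp [hk.2]
    rw [← Finset.sum_subset hsubset (fun k hk hk2 => by
      simp only [Finset.mem_range] at hk
      simp only [Finset.mem_Ico, not_and, not_lt] at hk2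
      have hkj : k < j := by omega
      rw [poch_neg_choose, Nat.choose_eq_zero_of_lt hkj]; simp)]
    rw [Finset.sum_Ico_eq_sum_range]
    simp only [show m + 1 - j = (m - j) + 1 by omega]
    have hterm : ∀ t ∈ Finset.range (m - j + 1),
        (m.choose (j+t) : ℂ) * (-1)^(m-(j+t)) * poch (-((j+t:ℕ):ℂ)) j
        = ((m.choose j : ℂ) * ((-1)^j * (j.factorial : ℂ)) * (-1)^(m-j)) *
            ((-1)^t * ((m-j).choose t : ℂ)) := by
      intro t ht
      simp only [Finset.mem_range] at ht
      rw [poch_neg_choose]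
      have hc : m.choose (j+t) * (j+t).choose j = m.choose j * (m-j).choose t := by
        have := Nat.choose_mul (n := m) (k := j+t) (s := j) (by omega)
        simpa using this
      have hc' : (m.choose (j+t) : ℂ) * ((j+t).choose j : ℂ)
          = (m.choose j : ℂ) * ((m-j).choose t : ℂ) := by
        exact_mod_cast congrArg (fun z : ℕ => (z:ℂ)) hc
      have hsign : ((-1:ℂ))^(m-(j+t)) = (-1)^(m-j) * (-1)^t := by
        have h2 : m - j = (m - (j+t)) + t := by omega
        rw [h2, pow_add, mul_assoc, ← pow_add, ← two_mul, pow_mul]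
        norm_num
      rw [hsign]
      calc (m.choose (j+t) : ℂ) * ((-1:ℂ)^(m-j) * (-1)^t) *
            ((-1)^j * (j.factorial:ℂ) * ((j+t).choose j : ℂ))
          = ((m.choose (j+t) : ℂ) * ((j+t).choose j : ℂ)) *
              ((-1:ℂ)^(m-j) * (-1)^t * ((-1)^j * (j.factorial:ℂ))) := by ring
        _ = ((m.choose j : ℂ) * ((m-j).choose t : ℂ)) *
              ((-1:ℂ)^(m-j) * (-1)^t * ((-1)^j * (j.factorial:ℂ))) := by rw [hc']
        _ = ((m.choose j : ℂ) * ((-1)^j * (j.factorial : ℂ)) * (-1)^(m-j)) *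
              ((-1)^t * ((m-j).choose t : ℂ)) := by ring
    rw [Finset.sum_congr rfl hterm, ← Finset.mul_sum, alt_sum]
    rcases eq_or_lt_of_le h with he | hlt
    · subst he; simp
    · rw [if_neg (by omega), if_neg (by omega), mul_zero]

noncomputable def Gaux (a b c f g : ℂ) (n j m k : ℕ) : ℂ :=
  (n.choose m : ℂ) * poch ((m:ℂ)+a+b) (n-m) * poch ((m:ℂ)+a+c) (n-m) *
    poch (a+f) m * poch (a+g) m *
    ((m.choose k : ℂ) * (-1)^(m-k) * poch (-(k:ℂ)) j) /
    (poch (a+f) j * poch (a+g) j * (j.factorial : ℂ))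

lemma term_eq (a b c f g : ℂ) (ha : 0 < a.re) (hb : 0 < b.re) (hc : 0 < c.re)
    (hf : 0 < f.re) (hg : 0 < g.re) (n j k s : ℕ) (hk : k ≤ n) (hs : s ≤ n - k) :
    (n.choose k : ℂ) * poch ((k:ℂ)+a+b) (n-k) * poch ((k:ℂ)+a+c) (n-k) *
      (poch ((k:ℂ)-(n:ℂ)) s * poch ((k:ℂ)+a+f) s * poch ((k:ℂ)+a+g) s /
        (poch ((k:ℂ)+a+b) s * poch ((k:ℂ)+a+c) s * (s.factorial:ℂ))) *
      (poch (a+f) k * poch (a+g) k *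
        (poch (-(k:ℂ)) j / (poch (a+f) j * poch (a+g) j * (j.factorial:ℂ))))
    = Gaux a b c f g n j (k+s) k := by
  have hm : k + s ≤ n := by omega
  have e1 : poch ((k:ℂ)+a+b) (n-k) = poch ((k:ℂ)+a+b) s * poch (((k+s:ℕ):ℂ)+a+b) (n-(k+s)) := by
    rw [show n - k = s + (n - (k+s)) from by omega, poch_add]
    congr 2
    push_cast; ring
  have e2 : poch ((k:ℂ)+a+c) (n-k) = poch ((k:ℂ)+a+c) s * poch (((k+s:ℕ):ℂ)+a+c) (n-(k+s)) := by
    rw [show n - k = s + (n - (k+s)) from by omega, poch_add]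
    congr 2
    push_cast; ring
  have e3 : poch (a+f) (k+s) = poch (a+f) k * poch ((k:ℂ)+a+f) s := by
    rw [poch_add]; congr 1; ring
  have e4 : poch (a+g) (k+s) = poch (a+g) k * poch ((k:ℂ)+a+g) s := by
    rw [poch_add]; congr 1; ring
  have e5 : poch ((k:ℂ)-(n:ℂ)) s = (-1)^s * (s.factorial:ℂ) * ((n-k).choose s : ℂ) := by
    rw [show (k:ℂ)-(n:ℂ) = -(((n-k:ℕ)):ℂ) from by rw [Nat.cast_sub hk]; ring, poch_neg_choose]
  have hchoose_ne : ((k+s).choose k : ℂ) ≠ 0 :=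
    Nat.cast_ne_zero.mpr (Nat.choose_pos (Nat.le_add_right k s)).ne'
  have e6 : (n.choose (k+s) : ℂ)
      = (n.choose k : ℂ) * ((n-k).choose s : ℂ) / ((k+s).choose k : ℂ) := by
    rw [eq_div_iff hchoose_ne]
    have h3 := Nat.choose_mul (n := n) (k := k+s) (s := k) (Nat.le_add_right k s)
    rw [show (k+s) - k = s from by omega] at h3
    exact_mod_cast h3
  have hb1 : poch ((k:ℂ)+a+b) s ≠ 0 := by
    apply poch_ne_zero
    simp only [Complex.add_re, Complex.natCast_re]
    have : (0:ℝ) ≤ (k:ℝ) := by positivity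
    linarith
  have hc1 : poch ((k:ℂ)+a+c) s ≠ 0 := by
    apply poch_ne_zero
    simp only [Complex.add_re, Complex.natCast_re]
    have : (0:ℝ) ≤ (k:ℝ) := by positivity
    linarith
  have hfj : poch (a+f) j ≠ 0 := poch_ne_zero (by simp only [Complex.add_re]; linarith) j
  have hgj : poch (a+g) j ≠ 0 := poch_ne_zero (by simp only [Complex.add_re]; linarith) j
  have hsf : (s.factorial:ℂ) ≠ 0 := Nat.cast_ne_zero.mpr s.factorial_ne_zero
  have hjf : (j.factorial:ℂ) ≠ 0 := Nat.cast_ne_zero.mpr j.factorial_ne_zero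
  unfold Gaux
  rw [e1, e2, e5, e3, e4, e6, show (k+s) - k = s from by omega]
  field_simp

lemma key (a b c f g : ℂ) (ha : 0 < a.re) (hb : 0 < b.re) (hc : 0 < c.re)
    (hf : 0 < f.re) (hg : 0 < g.re) (n j : ℕ) (hj : j ≤ n) :
    (∑ k ∈ Finset.range (n+1),
      (n.choose k : ℂ) * poch ((k:ℂ)+a+b) (n-k) * poch ((k:ℂ)+a+c) (n-k) *
        (∑ s ∈ Finset.range (n-k+1),
          poch ((k:ℂ)-(n:ℂ)) s * poch ((k:ℂ)+a+f) s * poch ((k:ℂ)+a+g) s /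
            (poch ((k:ℂ)+a+b) s * poch ((k:ℂ)+a+c) s * (s.factorial:ℂ))) *
        (poch (a+f) k * poch (a+g) k *
          (poch (-(k:ℂ)) j / (poch (a+f) j * poch (a+g) j * (j.factorial:ℂ)))))
    = poch (a+b) n * poch (a+c) n *
        (poch (-(n:ℂ)) j / (poch (a+b) j * poch (a+c) j * (j.factorial:ℂ))) := by
  have hfj : poch (a+f) j ≠ 0 := poch_ne_zero (by simp only [Complex.add_re]; linarith) j
  have hgj : poch (a+g) j ≠ 0 := poch_ne_zero (by simp only [Complex.add_re]; linarith) j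
  have hbj : poch (a+b) j ≠ 0 := poch_ne_zero (by simp only [Complex.add_re]; linarith) j
  have hcj : poch (a+c) j ≠ 0 := poch_ne_zero (by simp only [Complex.add_re]; linarith) j
  have hjf : (j.factorial:ℂ) ≠ 0 := Nat.cast_ne_zero.mpr j.factorial_ne_zero
  calc
    (∑ k ∈ Finset.range (n+1),
      (n.choose k : ℂ) * poch ((k:ℂ)+a+b) (n-k) * poch ((k:ℂ)+a+c) (n-k) *
        (∑ s ∈ Finset.range (n-k+1),
          poch ((k:ℂ)-(n:ℂ)) s * poch ((k:ℂ)+a+f) s * poch ((k:ℂ)+a+g) s /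
            (poch ((k:ℂ)+a+b) s * poch ((k:ℂ)+a+c) s * (s.factorial:ℂ))) *
        (poch (a+f) k * poch (a+g) k *
          (poch (-(k:ℂ)) j / (poch (a+f) j * poch (a+g) j * (j.factorial:ℂ)))))
      = ∑ k ∈ Finset.range (n+1), ∑ s ∈ Finset.range (n-k+1), Gaux a b c f g n j (k+s) k := by
        refine Finset.sum_congr rfl fun k hk => ?_
        simp only [Finset.mem_range] at hk
        rw [Finset.mul_sum, Finset.sum_mul]
        refine Finset.sum_congr rfl fun s hs => ?_
        simp only [Finset.mem_range] at hs
        exact term_eq a b c f g ha hb hc hf hg n j k s (by omega) (by omega)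
    _ = ∑ m ∈ Finset.range (n+1), ∑ k ∈ Finset.range (m+1), Gaux a b c f g n j m k := by
        rw [Finset.sum_sigma', Finset.sum_sigma']
        refine Finset.sum_nbij' (fun p => ⟨p.1 + p.2, p.1⟩) (fun q => ⟨q.2, q.1 - q.2⟩)
          ?_ ?_ ?_ ?_ ?_
        · rintro ⟨k, s⟩ hp
          simp only [Finset.mem_sigma, Finset.mem_range] at hp ⊢
          omega
        · rintro ⟨m, k⟩ hq
          simp only [Finset.mem_sigma, Finset.mem_range] at hq ⊢
          omega
        · rintro ⟨k, s⟩ hp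
          simp
        · rintro ⟨m, k⟩ hq
          simp only [Finset.mem_sigma, Finset.mem_range] at hq
          simp only [Sigma.mk.inj_iff, heq_eq_eq]
          exact ⟨by omega, trivial⟩
        · rintro ⟨k, s⟩ hp
          rfl
    _ = ∑ m ∈ Finset.range (n+1),
          (n.choose m : ℂ) * poch ((m:ℂ)+a+b) (n-m) * poch ((m:ℂ)+a+c) (n-m) *
            poch (a+f) m * poch (a+g) m *
            (if m = j then (-1:ℂ)^j * (j.factorial:ℂ) else 0) /
            (poch (a+f) j * poch (a+g) j * (j.factorial : ℂ)) := by
        refine Finset.sum_congr rfl fun m hm => ?_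
        simp only [Gaux]
        rw [← Finset.sum_div, ← Finset.mul_sum, cdh_inner_sum]
    _ = (n.choose j:ℂ) * poch ((j:ℂ)+a+b) (n-j) * poch ((j:ℂ)+a+c) (n-j) *
          poch (a+f) j * poch (a+g) j * ((-1:ℂ)^j * (j.factorial:ℂ)) /
          (poch (a+f) j * poch (a+g) j * (j.factorial:ℂ)) := by
        rw [Finset.sum_eq_single_of_mem j (by simp only [Finset.mem_range]; omega)
          (fun m _ hmj => by rw [if_neg hmj, mul_zero, zero_div])]
        rw [if_pos rfl]
    _ = poch (a+b) n * poch (a+c) n *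
          (poch (-(n:ℂ)) j / (poch (a+b) j * poch (a+c) j * (j.factorial:ℂ))) := by
        rw [poch_neg_choose n j]
        have e7 : poch (a+b) n = poch (a+b) j * poch ((j:ℂ)+a+b) (n-j) := by
          conv_lhs => rw [show n = j + (n - j) from by omega]
          rw [poch_add]; congr 1; ring
        have e8 : poch (a+c) n = poch (a+c) j * poch ((j:ℂ)+a+c) (n-j) := by
          conv_lhs => rw [show n = j + (n - j) from by omega]
          rw [poch_add]; congr 1; ring
        rw [e7, e8]
        field_simp

theorem cdHahn_connection_two_free (a b c d f g : ℂ)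
    (ha : 0 < a.re) (hb : 0 < b.re) (hc : 0 < c.re) (hd : 0 < d.re)
    (hf : 0 < f.re) (hg : 0 < g.re) (x : ℝ) (hx : 0 < x) (n : ℕ) :
    cdHahn n x a b c =
      ∑ k ∈ Finset.range (n + 1),
        (n.choose k : ℂ) * poch ((k : ℂ) + a + b) (n - k) * poch ((k : ℂ) + a + c) (n - k) *
          (∑ s ∈ Finset.range (n - k + 1),
            poch ((k : ℂ) - n) s * poch ((k : ℂ) + a + f) s * poch ((k : ℂ) + a + g) s /
              (poch ((k : ℂ) + a + b) s * poch ((k : ℂ) + a + c) s * s.factorial)) *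
          cdHahn k x a f g := by
  have hP : ∀ k, k ≤ n → cdHahn k x a f g =
      ∑ j ∈ Finset.range (n+1),
        poch (a+f) k * poch (a+g) k *
          (poch (-(k:ℂ)) j / (poch (a+f) j * poch (a+g) j * (j.factorial:ℂ))) *
          (poch (a + Complex.I*x) j * poch (a - Complex.I*x) j) := by
    intro k hk
    rw [cdHahn, Finset.mul_sum]
    have hsub : Finset.range (k+1) ⊆ Finset.range (n+1) :=
      Finset.range_subset_range.mpr (by omega)
    rw [Finset.sum_subset hsub (fun j hj1 hj2 => by
      simp only [Finset.mem_range, not_lt] at hj2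
      rw [poch_neg_eq_zero (by omega : k < j)]
      simp)]
    refine Finset.sum_congr rfl fun j hj => ?_
    rw [div_eq_mul_inv, div_eq_mul_inv]
    ring
  calc cdHahn n x a b c
      = ∑ j ∈ Finset.range (n+1),
          (poch (a+b) n * poch (a+c) n *
            (poch (-(n:ℂ)) j / (poch (a+b) j * poch (a+c) j * (j.factorial:ℂ)))) *
          (poch (a + Complex.I*x) j * poch (a - Complex.I*x) j) := by
        rw [cdHahn, Finset.mul_sum]
        refine Finset.sum_congr rfl fun j hj => ?_
        rw [div_eq_mul_inv, div_eq_mul_inv]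
        ring
    _ = ∑ j ∈ Finset.range (n+1),
          (∑ k ∈ Finset.range (n+1),
            (n.choose k : ℂ) * poch ((k:ℂ)+a+b) (n-k) * poch ((k:ℂ)+a+c) (n-k) *
              (∑ s ∈ Finset.range (n-k+1),
                poch ((k:ℂ)-(n:ℂ)) s * poch ((k:ℂ)+a+f) s * poch ((k:ℂ)+a+g) s /
                  (poch ((k:ℂ)+a+b) s * poch ((k:ℂ)+a+c) s * (s.factorial:ℂ))) *
              (poch (a+f) k * poch (a+g) k *
                (poch (-(k:ℂ)) j / (poch (a+f) j * poch (a+g) j * (j.factorial:ℂ))))) *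
          (poch (a + Complex.I*x) j * poch (a - Complex.I*x) j) := by
        refine Finset.sum_congr rfl fun j hj => ?_
        simp only [Finset.mem_range] at hj
        rw [key a b c f g ha hb hc hf hg n j (by omega)]
    _ = ∑ j ∈ Finset.range (n+1), ∑ k ∈ Finset.range (n+1),
          ((n.choose k : ℂ) * poch ((k:ℂ)+a+b) (n-k) * poch ((k:ℂ)+a+c) (n-k) *
              (∑ s ∈ Finset.range (n-k+1),
                poch ((k:ℂ)-(n:ℂ)) s * poch ((k:ℂ)+a+f) s * poch ((k:ℂ)+a+g) s /
                  (poch ((k:ℂ)+a+b) s * poch ((k:ℂ)+a+c) s * (s.factorial:ℂ))) *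
              (poch (a+f) k * poch (a+g) k *
                (poch (-(k:ℂ)) j / (poch (a+f) j * poch (a+g) j * (j.factorial:ℂ))))) *
          (poch (a + Complex.I*x) j * poch (a - Complex.I*x) j) := by
        refine Finset.sum_congr rfl fun j hj => ?_
        rw [Finset.sum_mul]
    _ = ∑ k ∈ Finset.range (n+1), ∑ j ∈ Finset.range (n+1),
          ((n.choose k : ℂ) * poch ((k:ℂ)+a+b) (n-k) * poch ((k:ℂ)+a+c) (n-k) *
              (∑ s ∈ Finset.range (n-k+1),
                poch ((k:ℂ)-(n:ℂ)) s * poch ((k:ℂ)+a+f) s * poch ((k:ℂ)+a+g) s /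
                  (poch ((k:ℂ)+a+b) s * poch ((k:ℂ)+a+c) s * (s.factorial:ℂ))) *
              (poch (a+f) k * poch (a+g) k *
                (poch (-(k:ℂ)) j / (poch (a+f) j * poch (a+g) j * (j.factorial:ℂ))))) *
          (poch (a + Complex.I*x) j * poch (a - Complex.I*x) j) := by
        exact Finset.sum_comm
    _ = ∑ k ∈ Finset.range (n + 1),
        (n.choose k : ℂ) * poch ((k : ℂ) + a + b) (n - k) * poch ((k : ℂ) + a + c) (n - k) *
          (∑ s ∈ Finset.range (n - k + 1),
            poch ((k : ℂ) - n) s * poch ((k : ℂ) + a + f) s * poch ((k : ℂ) + a + g) s /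
              (poch ((k : ℂ) + a + b) s * poch ((k : ℂ) + a + c) s * s.factorial)) *
          cdHahn k x a f g := by
        refine Finset.sum_congr rfl fun k hk => ?_
        simp only [Finset.mem_range] at hk
        rw [hP k (by omega), Finset.mul_sum]
        conv_rhs => rw [Finset.mul_sum]
        refine Finset.sum_congr rfl fun j hj => ?_
        ring
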